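/- arXiv:1611.04676 — 2 statements merged into one kernel-verified Lean document; each statement's English description precedes it below -/
import Mathlib

section
/- The Goldman Lie algebra of the torus over ℚ is generated as a Lie algebra by the three elements e_{(1,0)}, e_{(0,1)}, and e_{(-1,-1)} + e_{(0,1)} + e_{(0,0)}. -/
noncomputable def gb (x y : (ℤ × ℤ) →₀ ℚ) : (ℤ × ℤ) →₀ ℚ :=
  x.sum fun p a => y.sum fun q b =>
    Finsupp.single (p.1 + q.1, p.2 + q.2) (a * b * ((p.1 * q.2 - p.2 * q.1 : ℤ) : ℚ))

noncomputable def e (p : ℤ × ℤ) : (ℤ × ℤ) →₀ ℚ := Finsupp.single p 1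

lemma gb_e (p q : ℤ × ℤ) : gb (e p) (e q) =
    ((p.1 * q.2 - p.2 * q.1 : ℤ) : ℚ) • e (p.1 + q.1, p.2 + q.2) := by
  unfold gb e
  rw [Finsupp.sum_single_index (by simp), Finsupp.sum_single_index (by simp),
    Finsupp.smul_single, smul_eq_mul, one_mul, one_mul, mul_one]

lemma gb_add_right (x y z : (ℤ × ℤ) →₀ ℚ) : gb x (y + z) = gb x y + gb x z := by
  unfold gb
  rw [← Finsupp.sum_add]
  refine Finsupp.sum_congr fun p _ => ?_
  rw [Finsupp.sum_add_index (by intros; simp)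
    (by intros; rw [← Finsupp.single_add]; congr 1; ring)]

theorem goldman_fg3 (P : Submodule ℚ ((ℤ × ℤ) →₀ ℚ))
    (h1 : e (1, 0) ∈ P) (h2 : e (0, 1) ∈ P)
    (h3 : e (-1, -1) + e (0, 1) + e (0, 0) ∈ P)
    (hcl : ∀ x ∈ P, ∀ y ∈ P, gb x y ∈ P) : P = ⊤ := by
  have step : ∀ p q : ℤ × ℤ, e p ∈ P → e q ∈ P →
      (p.1 * q.2 - p.2 * q.1 : ℤ) ≠ 0 → e (p.1 + q.1, p.2 + q.2) ∈ P := by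
    intro p q hp hq hd
    have h := hcl _ hp _ hq
    rw [gb_e] at h
    have h2 := P.smul_mem (((p.1 * q.2 - p.2 * q.1 : ℤ) : ℚ))⁻¹ h
    rwa [smul_smul, inv_mul_cancel₀ (by exact_mod_cast hd), one_smul] at h2
  -- e (1,1)
  have h11 : e (1, 1) ∈ P := by simpa using step (1, 0) (0, 1) h1 h2 (by norm_num)
  -- e (0,-1)
  have hc1 := hcl _ h1 _ h3
  rw [gb_add_right, gb_add_right, gb_e, gb_e, gb_e] at hc1
  norm_num at hc1
  have h0m1 : e (0, -1) ∈ P := by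
    have hsub := P.sub_mem h11 hc1
    have : e (1, 1) - (-e (0, -1) + e (1, 1)) = e (0, -1) := by abel
    rwa [this] at hsub
  -- e (-1,0)
  have hc2 := hcl _ h2 _ h3
  rw [gb_add_right, gb_add_right, gb_e, gb_e, gb_e] at hc2
  norm_num at hc2
  have hm10 : e (-1, 0) ∈ P := hc2
  -- e (-1,-1)
  have hm1m1 : e (-1, -1) ∈ P := by
    simpa using step (0, -1) (-1, 0) h0m1 hm10 (by norm_num)
  -- e (0,0)
  have h00 : e (0, 0) ∈ P := by
    have := P.sub_mem (P.sub_mem h3 hm1m1) h2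
    have he : e (-1, -1) + e (0, 1) + e (0, 0) - e (-1, -1) - e (0, 1) = e (0, 0) := by abel
    rwa [he] at this
  -- row 1 : all e (n, 1)
  have hrow1 : ∀ n : ℤ, e (n, 1) ∈ P := by
    intro n
    induction n using Int.induction_on with
    | zero => exact h2
    | succ n ih => simpa using step (n, 1) (1, 0) ih h1 (by norm_num)
    | pred n ih =>
      have := step (-n, 1) (-1, 0) ih hm10 (by norm_num)
      simpa [sub_eq_add_neg] using this
  -- row -1 : all e (n, -1)
  have hrowm1 : ∀ n : ℤ, e (n, -1) ∈ P := by
    intro n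
    induction n using Int.induction_on with
    | zero => exact h0m1
    | succ n ih => simpa using step (n, -1) (1, 0) ih h1 (by norm_num)
    | pred n ih =>
      have := step (-n, -1) (-1, 0) ih hm10 (by norm_num)
      simpa [sub_eq_add_neg] using this
  -- row 0 : all e (n, 0)
  have hrow0 : ∀ n : ℤ, e (n, 0) ∈ P := by
    intro n
    rcases eq_or_ne n 0 with rfl | hn
    · exact h00
    · simpa using step (n, 1) (0, -1) (hrow1 n) h0m1 (by simpa using hn)
  -- all rows
  have key : ∀ j i : ℤ, e (i, j) ∈ P := by
    intro j
    induction j using Int.induction_on with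
    | zero => exact hrow0
    | succ n ih =>
      intro i
      rcases eq_or_ne i 0 with rfl | hi
      · have := step (1, (n : ℤ)) (-1, 1) (ih 1) (hrow1 (-1)) (by push_cast; omega)
        simpa using this
      · simpa using step (i, (n : ℤ)) (0, 1) (ih i) h2 (by simpa using hi)
    | pred n ih =>
      intro i
      rcases eq_or_ne i 0 with rfl | hi
      · have := step (1, -(n : ℤ)) (-1, -1) (ih 1) hm1m1
          (by push_cast; omega)
        simpa [sub_eq_add_neg] using this
      · have := step (i, -(n : ℤ)) (0, -1) (ih i) h0m1 (by simpa using hi)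
        simpa [sub_eq_add_neg] using this
  -- conclude
  rw [eq_top_iff]
  rintro x -
  induction x using Finsupp.induction with
  | zero => exact P.zero_mem
  | single_add p c f _ _ ih =>
    refine P.add_mem ?_ ih
    have : Finsupp.single p c = c • e p := by simp [e, Finsupp.smul_single]
    rw [this]
    exact P.smul_mem c (by simpa using key p.2 p.1)
end

section
/- In the Goldman Lie algebra of the torus over ℚ, every basis element e_{(i,j)} with (i,j) ≠ (0,0) can be written as a bracket [x, y] of two elements of ℚ[ℤ²]; specifically, if d = gcd(i,j) and xi + yj = d, then e_{(i,j)} = [e_{(i+y,j-x)}, (1/d)·e_{(-y,x)}]. -/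
theorem goldman_basis_bracket (i j x y : ℤ) (hij : (i, j) ≠ (0, 0))
    (h : x * i + y * j = Int.gcd i j) :
    e (i, j) = gb (e (i + y, j - x)) (((1 : ℚ) / (Int.gcd i j : ℤ)) • e (-y, x)) ∧
    ∃ u v : (ℤ × ℤ) →₀ ℚ, e (i, j) = gb u v := by
  have hd : (Int.gcd i j : ℤ) ≠ 0 := by
    simp only [ne_eq, Int.natCast_eq_zero, Int.gcd_eq_zero_iff, not_and_or]
    by_contra hc
    push_neg at hc
    exact hij (by simp [hc.1, hc.2])
  have key : e (i, j) = gb (e (i + y, j - x))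
      (((1 : ℚ) / (Int.gcd i j : ℤ)) • e (-y, x)) := by
    rw [gb, e, e, e, Finsupp.smul_single, smul_eq_mul, mul_one]
    rw [Finsupp.sum_single_index, Finsupp.sum_single_index]
    · have hdet : ((i + y) * x - (j - x) * (-y)) = (Int.gcd i j : ℤ) := by
        rw [← h]; ring
      simp only [hdet]
      rw [one_mul]
      have : (1 : ℚ) / ((Int.gcd i j : ℤ) : ℚ) * ((Int.gcd i j : ℤ) : ℚ) = 1 := by
        rw [div_mul_cancel₀]
        exact_mod_cast hd
      rw [this]
      congr 1 <;> ring
    · simp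
    · simp
  exact ⟨key, _, _, key⟩
end
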